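/- If g is a symplectic automorphism of V and x, y ∈ V, then the transformed annihilators and creators a_g(v) = a(C_g v) + c(A_g v) and c_g(v) = c(C_g v) + a(A_g v) satisfy the canonical commutation relations: [a_g(x), a_g(y)] = 0, [a_g(x), c_g(y)] = <x|y>·I, [c_g(x), c_g(y)] = 0. -/

import Mathlib

open scoped BigOperators

/-- The complex-linear part `C_f = ½(f − JfJ)` of a real-linear map `f`. -/
noncomputable def Cpart {V : Type*} [AddCommGroup V] [Module ℂ V] (f : V → V) : V → V :=
  fun v => (2 : ℂ)⁻¹ • (f v - Complex.I • f (Complex.I • v))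

/-- The antilinear part `A_f = ½(f + JfJ)` of a real-linear map `f`. -/
noncomputable def Apart {V : Type*} [AddCommGroup V] [Module ℂ V] (f : V → V) : V → V :=
  fun v => (2 : ℂ)⁻¹ • (f v + Complex.I • f (Complex.I • v))

open Complex in
private lemma ckey1 (z1 z2 z3 z4 E : ℂ) (h1 : z1.im = E.im) (h2 : z2.im = E.im)
    (h3 : z3.im = -E.re) (h4 : z4.im = E.re) :
    (4:ℂ)⁻¹ * (z1 + z2 + I*z3 - I*z4)
      - (4:ℂ)⁻¹ * ((starRingEnd ℂ) z1 + (starRingEnd ℂ) z2 + I*(starRingEnd ℂ) z3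
          - I*(starRingEnd ℂ) z4) = E := by
  have h : z1 + z2 + I*z3 - I*z4 - ((starRingEnd ℂ) z1 + (starRingEnd ℂ) z2
      + I*(starRingEnd ℂ) z3 - I*(starRingEnd ℂ) z4) = 4*E := by
    apply Complex.ext <;> simp <;> linarith
  linear_combination (4:ℂ)⁻¹ * h

open Complex in
private lemma ckey2 (z1 z2 z3 z4 E : ℂ) (h1 : z1.im = E.im) (h2 : z2.im = E.im)
    (h3 : z3.im = -E.re) (h4 : z4.im = E.re) :
    (4:ℂ)⁻¹ * (z1 - z2 + I*z3 + I*z4)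
      = (4:ℂ)⁻¹ * ((starRingEnd ℂ) z1 - (starRingEnd ℂ) z2 + I*(starRingEnd ℂ) z3
          + I*(starRingEnd ℂ) z4) := by
  have h : z1 - z2 + I*z3 + I*z4 = (starRingEnd ℂ) z1 - (starRingEnd ℂ) z2
      + I*(starRingEnd ℂ) z3 + I*(starRingEnd ℂ) z4 := by
    apply Complex.ext <;> simp <;> linarith
  linear_combination (4:ℂ)⁻¹ * h

/-- Canonical commutation relations for the transformed creators and annihilators.  Let `g`
be a symplectic automorphism of the complex Hilbert space `V` (a bounded real-linear
bijection preserving `Ω = Im⟨·|·⟩`), with complex-linear part `C_g` and antilinear part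
`A_g`.  On the symmetric algebra `SV` (modelled by a commutative ℂ-algebra `A` generated by
the image of `ι : V →ₗ[ℂ] A`), with `c v` multiplication by `ι v` and `a v` the derivation
with `a v 1 = 0`, `a v (ι w) = ⟨v|w⟩·1`, set
`a_g(v) = a(C_g v) + c(A_g v)` and `c_g(v) = c(C_g v) + a(A_g v)`.  Then
`[a_g(x), a_g(y)] = 0`, `[a_g(x), c_g(y)] = ⟨x|y⟩·I`, `[c_g(x), c_g(y)] = 0`. -/
theorem stmt19 {V : Type*} [NormedAddCommGroup V] [InnerProductSpace ℂ V]
    (g : V →L[ℝ] V) (hgbij : Function.Bijective g)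
    (hsymp : ∀ x y : V, (inner ℂ (g x) (g y) : ℂ).im = (inner ℂ x y : ℂ).im)
    {A : Type*} [CommRing A] [Algebra ℂ A] (ι : V →ₗ[ℂ] A)
    (hgen : Algebra.adjoin ℂ (Set.range ι) = ⊤)
    (a : V → A →ₗ[ℂ] A)
    (ha1 : ∀ v, a v 1 = 0)
    (haι : ∀ v w, a v (ι w) = (inner ℂ v w : ℂ) • (1 : A))
    (haDer : ∀ v p q, a v (p * q) = a v p * q + p * a v q)
    (c : V → A →ₗ[ℂ] A)
    (hc : ∀ v, c v = LinearMap.mulLeft ℂ (ι v))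
    (ag cg : V → A →ₗ[ℂ] A)
    (hag : ∀ v, ag v = a (Cpart (g : V → V) v) + c (Apart (g : V → V) v))
    (hcg : ∀ v, cg v = c (Cpart (g : V → V) v) + a (Apart (g : V → V) v)) :
    ∀ x y : V,
      (ag x ∘ₗ ag y - ag y ∘ₗ ag x = 0) ∧
      (ag x ∘ₗ cg y - cg y ∘ₗ ag x = (inner ℂ x y : ℂ) • LinearMap.id) ∧
      (cg x ∘ₗ cg y - cg y ∘ₗ cg x = 0) := by
  open Complex in
  -- imaginary-part facts from the symplectic condition
  have him1 : ∀ x y : V, (inner ℂ (g x) (g y) : ℂ).im = (inner ℂ x y : ℂ).im := hsymp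
  have him2 : ∀ x y : V, (inner ℂ (g (I • x)) (g (I • y)) : ℂ).im = (inner ℂ x y : ℂ).im := by
    intro x y
    rw [hsymp, inner_smul_left, inner_smul_right, Complex.conj_I]
    simp
  have him3 : ∀ x y : V, (inner ℂ (g (I • x)) (g y) : ℂ).im = -(inner ℂ x y : ℂ).re := by
    intro x y
    rw [hsymp, inner_smul_left, Complex.conj_I]
    simp
  have him4 : ∀ x y : V, (inner ℂ (g x) (g (I • y)) : ℂ).im = (inner ℂ x y : ℂ).re := by
    intro x y
    rw [hsymp, inner_smul_right]
    simp
  -- expansions of inner products of the complex-linear/antilinear parts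
  have eCC : ∀ x y : V, (inner ℂ (Cpart (g : V → V) x) (Cpart (g : V → V) y) : ℂ)
      = (4:ℂ)⁻¹ * ((inner ℂ (g x) (g y) : ℂ) + (inner ℂ (g (I • x)) (g (I • y)) : ℂ)
        + I * (inner ℂ (g (I • x)) (g y) : ℂ) - I * (inner ℂ (g x) (g (I • y)) : ℂ)) := by
    intro x y
    simp only [Cpart, inner_smul_left, inner_smul_right, inner_sub_left, inner_sub_right,
      map_inv₀, Complex.conj_I, Complex.conj_ofNat]
    ring_nf
    simp [Complex.I_sq]
    ring_nf
  have eAA : ∀ x y : V, (inner ℂ (Apart (g : V → V) y) (Apart (g : V → V) x) : ℂ)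
      = (4:ℂ)⁻¹ * ((starRingEnd ℂ) (inner ℂ (g x) (g y) : ℂ)
        + (starRingEnd ℂ) (inner ℂ (g (I • x)) (g (I • y)) : ℂ)
        + I * (starRingEnd ℂ) (inner ℂ (g (I • x)) (g y) : ℂ)
        - I * (starRingEnd ℂ) (inner ℂ (g x) (g (I • y)) : ℂ)) := by
    intro x y
    simp only [Apart, inner_smul_left, inner_smul_right, inner_add_left, inner_add_right,
      map_inv₀, Complex.conj_I, Complex.conj_ofNat]
    rw [show (inner ℂ (g y) (g x) : ℂ) = (starRingEnd ℂ) (inner ℂ (g x) (g y) : ℂ) from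
        (inner_conj_symm _ _).symm,
      show (inner ℂ (g (I • y)) (g (I • x)) : ℂ)
          = (starRingEnd ℂ) (inner ℂ (g (I • x)) (g (I • y)) : ℂ) from
        (inner_conj_symm _ _).symm,
      show (inner ℂ (g y) (g (I • x)) : ℂ)
          = (starRingEnd ℂ) (inner ℂ (g (I • x)) (g y) : ℂ) from
        (inner_conj_symm _ _).symm,
      show (inner ℂ (g (I • y)) (g x) : ℂ)
          = (starRingEnd ℂ) (inner ℂ (g x) (g (I • y)) : ℂ) from
        (inner_conj_symm _ _).symm]
    ring_nf
    simp [Complex.I_sq]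
    ring_nf
  have eCA : ∀ x y : V, (inner ℂ (Cpart (g : V → V) x) (Apart (g : V → V) y) : ℂ)
      = (4:ℂ)⁻¹ * ((inner ℂ (g x) (g y) : ℂ) - (inner ℂ (g (I • x)) (g (I • y)) : ℂ)
        + I * (inner ℂ (g (I • x)) (g y) : ℂ) + I * (inner ℂ (g x) (g (I • y)) : ℂ)) := by
    intro x y
    simp only [Cpart, Apart, inner_smul_left, inner_smul_right, inner_add_left, inner_add_right,
      inner_sub_left, inner_sub_right, map_inv₀, Complex.conj_I, Complex.conj_ofNat]
    ring_nf
    simp [Complex.I_sq]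
    ring_nf
  -- the three key scalar identities
  have L1 : ∀ x y : V, (inner ℂ (Cpart (g : V → V) x) (Cpart (g : V → V) y) : ℂ)
      - (inner ℂ (Apart (g : V → V) y) (Apart (g : V → V) x) : ℂ) = (inner ℂ x y : ℂ) := by
    intro x y
    rw [eCC x y, eAA x y]
    exact ckey1 _ _ _ _ _ (him1 x y) (him2 x y) (him3 x y) (him4 x y)
  have L2 : ∀ x y : V, (inner ℂ (Cpart (g : V → V) x) (Apart (g : V → V) y) : ℂ)
      = (inner ℂ (Cpart (g : V → V) y) (Apart (g : V → V) x) : ℂ) := by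
    intro x y
    rw [eCA x y, eCA y x,
      show (inner ℂ (g y) (g x) : ℂ) = (starRingEnd ℂ) (inner ℂ (g x) (g y) : ℂ) from
        (inner_conj_symm _ _).symm,
      show (inner ℂ (g (I • y)) (g (I • x)) : ℂ)
          = (starRingEnd ℂ) (inner ℂ (g (I • x)) (g (I • y)) : ℂ) from
        (inner_conj_symm _ _).symm,
      show (inner ℂ (g y) (g (I • x)) : ℂ)
          = (starRingEnd ℂ) (inner ℂ (g (I • x)) (g y) : ℂ) from
        (inner_conj_symm _ _).symm,
      show (inner ℂ (g (I • y)) (g x) : ℂ)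
          = (starRingEnd ℂ) (inner ℂ (g x) (g (I • y)) : ℂ) from
        (inner_conj_symm _ _).symm]
    have := ckey2 (inner ℂ (g x) (g y) : ℂ) (inner ℂ (g (I • x)) (g (I • y)) : ℂ)
      (inner ℂ (g (I • x)) (g y) : ℂ) (inner ℂ (g x) (g (I • y)) : ℂ) (inner ℂ x y : ℂ)
      (him1 x y) (him2 x y) (him3 x y) (him4 x y)
    linear_combination this
  have L3 : ∀ x y : V, (inner ℂ (Apart (g : V → V) x) (Cpart (g : V → V) y) : ℂ)
      = (inner ℂ (Apart (g : V → V) y) (Cpart (g : V → V) x) : ℂ) := by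
    intro x y
    rw [← inner_conj_symm (Apart (g : V → V) x) (Cpart (g : V → V) y),
      ← inner_conj_symm (Apart (g : V → V) y) (Cpart (g : V → V) x), L2 y x]
  -- operator commutators
  have hac : ∀ v w : V, a v ∘ₗ c w - c w ∘ₗ a v = (inner ℂ v w : ℂ) • LinearMap.id := by
    intro v w
    ext p
    simp only [LinearMap.sub_apply, LinearMap.comp_apply, hc, LinearMap.mulLeft_apply,
      LinearMap.smul_apply, LinearMap.id_apply]
    rw [haDer, haι]
    simp [smul_mul_assoc]
  have hcc : ∀ v w : V, c v ∘ₗ c w = c w ∘ₗ c v := by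
    intro v w
    ext p
    simp only [LinearMap.comp_apply, hc, LinearMap.mulLeft_apply]
    ring
  have haa : ∀ v w : V, a v ∘ₗ a w = a w ∘ₗ a v := by
    intro v w
    ext p
    simp only [LinearMap.comp_apply]
    have hp : p ∈ Algebra.adjoin ℂ (Set.range ι) := hgen.symm ▸ Algebra.mem_top
    induction hp using Algebra.adjoin_induction with
    | mem u hu =>
      obtain ⟨u, rfl⟩ := hu
      simp [haι, ha1]
    | algebraMap r =>
      simp [Algebra.algebraMap_eq_smul_one, ha1]
    | add p q hp hq ihp ihq =>
      simp [map_add, ihp, ihq]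
    | mul p q hp hq ihp ihq =>
      simp only [haDer, map_add, ihp, ihq]
      ring
  have expand : ∀ f1 f2 h1 h2 : A →ₗ[ℂ] A,
      (f1 + f2) ∘ₗ (h1 + h2) - (h1 + h2) ∘ₗ (f1 + f2)
        = (f1 ∘ₗ h1 - h1 ∘ₗ f1) + (f1 ∘ₗ h2 - h2 ∘ₗ f1)
          + (f2 ∘ₗ h1 - h1 ∘ₗ f2) + (f2 ∘ₗ h2 - h2 ∘ₗ f2) := by
    intro f1 f2 h1 h2
    simp only [LinearMap.add_comp, LinearMap.comp_add]
    abel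
  intro x y
  refine ⟨?_, ?_, ?_⟩
  · rw [hag, hag, expand, haa, hcc, sub_self, sub_self, hac,
      show c (Apart (g : V → V) x) ∘ₗ a (Cpart (g : V → V) y)
          - a (Cpart (g : V → V) y) ∘ₗ c (Apart (g : V → V) x)
        = -((inner ℂ (Cpart (g : V → V) y) (Apart (g : V → V) x) : ℂ) • LinearMap.id) by
        rw [← hac]; abel, L2 x y]
    abel
  · rw [hag, hcg, expand, haa, hcc, sub_self, sub_self, hac,
      show c (Apart (g : V → V) x) ∘ₗ a (Apart (g : V → V) y)
          - a (Apart (g : V → V) y) ∘ₗ c (Apart (g : V → V) x)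
        = -((inner ℂ (Apart (g : V → V) y) (Apart (g : V → V) x) : ℂ) • LinearMap.id) by
        rw [← hac]; abel,
      ← L1 x y, sub_smul (R := ℂ) (M := A →ₗ[ℂ] A)]
    abel
  · rw [hcg, hcg, expand, haa, hcc, sub_self, sub_self, hac,
      show c (Cpart (g : V → V) x) ∘ₗ a (Apart (g : V → V) y)
          - a (Apart (g : V → V) y) ∘ₗ c (Cpart (g : V → V) x)
        = -((inner ℂ (Apart (g : V → V) y) (Cpart (g : V → V) x) : ℂ) • LinearMap.id) by
        rw [← hac]; abel, L3 x y]
    abel
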